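/- arXiv:0709.1385 — 2 statements merged into one kernel-verified Lean document; each statement's English description precedes it below -/
import Mathlib

section
/- Let n ≥ 1, p > 1, a > 0, t ∈ ℝ, and let g_a(x) = e^{−a|x|²/2}. Set ζ = ζ(t) = (p−1)a/(1+(at)²) + a/(1+ita) = a(p − iat)/(1 + (at)²), which has positive real part. Then for every x ∈ ℝⁿ, 𝓕(|U(t)g_a|^{p−1} U(t)g_a)(x) = (1 + (at)²)^{−n(p−1)/4} (1 + ita)^{−n/2} ζ^{−n/2} e^{−|x|²/(2ζ)}, where the complex powers (1 + ita)^{−n/2} and ζ^{−n/2} are taken with the principal branch. -/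
open MeasureTheory Real Complex Filter
open scoped RealInnerProductSpace ENNReal Topology

noncomputable section

/-- `ℝⁿ` as a Euclidean space. -/
abbrev Rn (n : ℕ) := EuclideanSpace ℝ (Fin n)

/-- The Fourier transform `𝓕 f (ξ) = (2π)^{-n/2} ∫ f(x) e^{-i x·ξ} dx`. -/
def FT (n : ℕ) (f : Rn n → ℂ) (ξ : Rn n) : ℂ :=
  (((2 * π) ^ (-(n : ℝ) / 2) : ℝ) : ℂ) *
    ∫ x : Rn n, f x * Complex.exp (-(Complex.I * ((⟪x, ξ⟫ : ℝ) : ℂ)))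

/-- The inverse Fourier transform. -/
def FTinv (n : ℕ) (f : Rn n → ℂ) (x : Rn n) : ℂ :=
  (((2 * π) ^ (-(n : ℝ) / 2) : ℝ) : ℂ) *
    ∫ ξ : Rn n, f ξ * Complex.exp (Complex.I * ((⟪x, ξ⟫ : ℝ) : ℂ))

/-- The free Schrödinger group `U(t) = e^{i(t/2)Δ}`, defined on the Fourier side by
`𝓕(U(t)f)(ξ) = e^{-i(t/2)|ξ|²} 𝓕f(ξ)`. -/
def Ugrp (n : ℕ) (t : ℝ) (f : Rn n → ℂ) : Rn n → ℂ :=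
  FTinv n fun ξ => Complex.exp (-(Complex.I * ((t / 2 : ℝ) : ℂ) * ((‖ξ‖ ^ 2 : ℝ) : ℂ))) * FT n f ξ

/-- The nonlinearity `f ↦ |f|^{p-1} f`. -/
def nlin (p : ℝ) {n : ℕ} (f : Rn n → ℂ) (x : Rn n) : ℂ :=
  ((‖f x‖ ^ (p - 1) : ℝ) : ℂ) * f x

/-- `δ(r) = n/2 - n/r`. -/
def sdelta (n : ℕ) (r : ℝ) : ℝ := n / 2 - n / r

/-- The integrand `e^{i(t/2)|ξ|²} 𝓕(|U(t)φ|^{p-1}U(t)φ)(ξ)`. -/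
def lhsInt (n : ℕ) (p : ℝ) (φ : Rn n → ℂ) (t : ℝ) (ξ : Rn n) : ℂ :=
  Complex.exp (Complex.I * ((t / 2 : ℝ) : ℂ) * ((‖ξ‖ ^ 2 : ℝ) : ℂ)) *
    FT n (nlin p (Ugrp n t φ)) ξ

/-- The integrand `|t|^{n(p-1)/2-2} U(t)(|U(-t)𝓕φ|^{p-1}U(-t)𝓕φ)(ξ)`. -/
def rhsInt (n : ℕ) (p : ℝ) (φ : Rn n → ℂ) (t : ℝ) (ξ : Rn n) : ℂ :=
  ((|t| ^ ((n : ℝ) * (p - 1) / 2 - 2) : ℝ) : ℂ) *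
    Ugrp n t (nlin p (Ugrp n (-t) (FT n φ))) ξ

/-- The same integrand without the power of `t` (for `p = 1 + 4/n` the power vanishes). -/
def rhsInt0 (n : ℕ) (p : ℝ) (φ : Rn n → ℂ) (t : ℝ) (ξ : Rn n) : ℂ :=
  Ugrp n t (nlin p (Ugrp n (-t) (FT n φ))) ξ

/-- The Gaussian `g_a(x) = e^{-a|x|²/2}`. -/
def gauss (n : ℕ) (a : ℝ) (x : Rn n) : ℂ :=
  Complex.exp (-((a * ‖x‖ ^ 2 / 2 : ℝ) : ℂ))

end

/-! ### Auxiliary lemmas -/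

lemma gauss_int (n : ℕ) {b : ℂ} (hb : 0 < b.re) (c : ℂ) (w : Rn n) :
    ∫ v : Rn n, Complex.exp (-b * ‖v‖^2 + c * ⟪w, v⟫) =
      (↑π/b)^((n:ℂ)/2) * Complex.exp (c^2 * ‖w‖^2 / (4*b)) := by
  have := GaussianFourier.integral_cexp_neg_mul_sq_norm_add (V := Rn n) hb c w
  simpa using this

lemma real_mul_cpow' {r : ℝ} (hr : 0 < r) {z : ℂ} (hz : z ≠ 0) (s : ℂ) :
    ((r:ℂ)*z)^s = (r:ℂ)^s * z^s := by
  have hr' : (r:ℂ) ≠ 0 := by exact_mod_cast hr.ne'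
  rw [Complex.cpow_def_of_ne_zero (mul_ne_zero hr' hz),
    Complex.log_ofReal_mul hr hz, add_mul, Complex.exp_add,
    Complex.ofReal_log hr.le,
    ← Complex.cpow_def_of_ne_zero hr', ← Complex.cpow_def_of_ne_zero hz]

lemma FT_gauss (n : ℕ) {a : ℝ} (ha : 0 < a) (ξ : Rn n) :
    FT n (gauss n a) ξ =
      ((a ^ (-(n:ℝ)/2) : ℝ) : ℂ) * Complex.exp (-((‖ξ‖:ℂ)^2) / (2*(a:ℂ))) := by
  have hb : (0:ℝ) < ((((a/2 : ℝ)):ℂ)).re := by simpa using by positivity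
  have key : (∫ x : Rn n, gauss n a x * Complex.exp (-(Complex.I * ((⟪x, ξ⟫ : ℝ) : ℂ))))
      = ∫ x : Rn n, Complex.exp (-((a/2 : ℝ):ℂ) * ‖x‖^2 + (-Complex.I) * ⟪ξ, x⟫) := by
    congr 1; funext x
    rw [gauss, ← Complex.exp_add, real_inner_comm]
    congr 1
    push_cast
    ring
  rw [FT, key, gauss_int n hb (-Complex.I) ξ]
  have h1 : ((↑π/((a/2:ℝ):ℂ)))^((n:ℂ)/2) = (((2*π/a) ^ ((n:ℝ)/2) : ℝ) : ℂ) := by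
    rw [show (↑π/((a/2:ℝ):ℂ)) = (((2*π/a : ℝ)):ℂ) by push_cast; field_simp]
    rw [Complex.ofReal_cpow (by positivity) ((n:ℝ)/2)]
    push_cast; ring_nf
  rw [h1]
  have h2 : ((2*π) ^ (-(n:ℝ)/2) : ℝ) * ((2*π/a) ^ ((n:ℝ)/2) : ℝ) = a ^ (-(n:ℝ)/2) := by
    rw [Real.div_rpow (by positivity) ha.le, neg_div, Real.rpow_neg (by positivity),
      Real.rpow_neg ha.le]
    field_simp
  have h3 : (-Complex.I)^2 * (‖ξ‖:ℂ)^2 / (4*((a/2:ℝ):ℂ)) = -((‖ξ‖:ℂ)^2) / (2*(a:ℂ)) := by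
    rw [show ((-Complex.I)^2 : ℂ) = -1 by simp [Complex.I_sq],
      show (4*((a/2:ℝ):ℂ)) = 2*(a:ℂ) by push_cast; ring]
    ring
  rw [h3, ← h2]
  push_cast
  ring

lemma Ugrp_gauss (n : ℕ) (t : ℝ) {a : ℝ} (ha : 0 < a) (x : Rn n) :
    Ugrp n t (gauss n a) x =
      (1 + Complex.I*(a:ℂ)*(t:ℂ))^(-(n:ℂ)/2) *
        Complex.exp (-((a:ℂ)*(‖x‖:ℂ)^2)/(2*(1 + Complex.I*(a:ℂ)*(t:ℂ)))) := by
  have haC : (a:ℂ) ≠ 0 := by exact_mod_cast ha.ne'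
  set z : ℂ := 1 + Complex.I*(a:ℂ)*(t:ℂ) with hzdef
  have hzre : z.re = 1 := by simp [hzdef]
  have hz : z ≠ 0 := fun h => by simp [h] at hzre
  have harg : z.arg ≠ π := by
    intro h
    have := (Complex.arg_eq_pi_iff.mp h).1
    rw [hzre] at this; norm_num at this
  set b : ℂ := ((1/(2*a) : ℝ):ℂ) + ((t/2 : ℝ):ℂ)*Complex.I with hbdef
  have hbre : 0 < b.re := by simp [hbdef]; positivity
  have hbz : b = z/(2*(a:ℂ)) := by
    rw [hbdef, hzdef]; push_cast; field_simp
  rw [show Ugrp n t (gauss n a) x = (((2 * π) ^ (-(n : ℝ) / 2) : ℝ) : ℂ) *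
    ∫ ξ : Rn n, (Complex.exp (-(Complex.I * ((t / 2 : ℝ) : ℂ) * ((‖ξ‖ ^ 2 : ℝ) : ℂ))) *
      FT n (gauss n a) ξ) * Complex.exp (Complex.I * ((⟪x, ξ⟫ : ℝ) : ℂ)) from rfl]
  have key : (∫ ξ : Rn n, (Complex.exp (-(Complex.I * ((t / 2 : ℝ) : ℂ) * ((‖ξ‖ ^ 2 : ℝ) : ℂ))) *
      FT n (gauss n a) ξ) * Complex.exp (Complex.I * ((⟪x, ξ⟫ : ℝ) : ℂ)))
      = ((a ^ (-(n:ℝ)/2) : ℝ) : ℂ) * ∫ ξ : Rn n, Complex.exp (-b*‖ξ‖^2 + Complex.I * ⟪x, ξ⟫) := by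
    rw [← MeasureTheory.integral_const_mul]
    congr 1; funext ξ
    rw [FT_gauss n ha ξ]
    rw [show Complex.exp (-(Complex.I * ((t / 2 : ℝ) : ℂ) * ((‖ξ‖ ^ 2 : ℝ) : ℂ))) *
        (((a ^ (-(n:ℝ)/2) : ℝ) : ℂ) * Complex.exp (-((‖ξ‖:ℂ)^2) / (2*(a:ℂ)))) *
        Complex.exp (Complex.I * ((⟪x, ξ⟫ : ℝ) : ℂ)) =
        ((a ^ (-(n:ℝ)/2) : ℝ) : ℂ) * (Complex.exp (-(Complex.I * ((t / 2 : ℝ) : ℂ) * ((‖ξ‖ ^ 2 : ℝ) : ℂ))) *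
        Complex.exp (-((‖ξ‖:ℂ)^2) / (2*(a:ℂ))) * Complex.exp (Complex.I * ((⟪x, ξ⟫ : ℝ) : ℂ))) from by ring,
      ← Complex.exp_add, ← Complex.exp_add]
    congr 2
    rw [hbdef]; push_cast; field_simp; ring
  rw [key, gauss_int n hbre Complex.I x]
  have hpib : (↑π/b) = (((2*π*a : ℝ)):ℂ) * z⁻¹ := by
    rw [hbz]; push_cast; field_simp
  have h1 : (↑π/b)^((n:ℂ)/2) = (((2*π*a) ^ ((n:ℝ)/2) : ℝ):ℂ) * z^(-(n:ℂ)/2) := by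
    rw [hpib, real_mul_cpow' (by positivity) (inv_ne_zero hz) ((n:ℂ)/2),
      Complex.inv_cpow _ _ harg, ← Complex.cpow_neg,
      Complex.ofReal_cpow (by positivity) ((n:ℝ)/2)]
    push_cast; ring_nf
  have h2 : Complex.I^2 * (‖x‖:ℂ)^2/(4*b) = -((a:ℂ)*(‖x‖:ℂ)^2)/(2*z) := by
    rw [hbz, Complex.I_sq]; field_simp; ring
  have h3 : ((2*π) ^ (-(n:ℝ)/2) : ℝ) * (a ^ (-(n:ℝ)/2) : ℝ) * ((2*π*a) ^ ((n:ℝ)/2) : ℝ) = 1 := by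
    rw [Real.mul_rpow (by positivity) ha.le, neg_div, Real.rpow_neg (by positivity),
      Real.rpow_neg ha.le]
    field_simp
  rw [h1, h2]
  rw [show (((2 * π) ^ (-(n : ℝ) / 2) : ℝ) : ℂ) * (((a ^ (-(n:ℝ)/2) : ℝ) : ℂ) *
      ((((2*π*a) ^ ((n:ℝ)/2) : ℝ):ℂ) * z^(-(n:ℂ)/2) * Complex.exp (-((a:ℂ)*(‖x‖:ℂ)^2)/(2*z)))) =
      (((((2*π) ^ (-(n:ℝ)/2) : ℝ) * (a ^ (-(n:ℝ)/2) : ℝ) * ((2*π*a) ^ ((n:ℝ)/2) : ℝ) : ℝ)):ℂ) *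
      (z^(-(n:ℂ)/2) * Complex.exp (-((a:ℂ)*(‖x‖:ℂ)^2)/(2*z))) from by push_cast; ring, h3]
  simp

lemma nlin_Ugrp_gauss (n : ℕ) (t p : ℝ) {a : ℝ} (ha : 0 < a) (x : Rn n) :
    nlin p (Ugrp n t (gauss n a)) x =
      (((1+(a*t)^2) ^ (-(n:ℝ)*(p-1)/4) : ℝ) : ℂ) * (1 + Complex.I*(a:ℂ)*(t:ℂ))^(-(n:ℂ)/2) *
        Complex.exp (-(((((p-1)*a/(1+(a*t)^2) : ℝ):ℂ) + (a:ℂ)/(1 + Complex.I*(a:ℂ)*(t:ℂ)))/2)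
          * (‖x‖:ℂ)^2) := by
  have hpos : (0:ℝ) < 1+(a*t)^2 := by positivity
  set z : ℂ := 1 + Complex.I*(a:ℂ)*(t:ℂ) with hzdef
  have hzre : z.re = 1 := by simp [hzdef]
  have hzim : z.im = a*t := by simp [hzdef]
  have hz : z ≠ 0 := fun h => by simp [h] at hzre
  have hns : Complex.normSq z = 1+(a*t)^2 := by
    rw [Complex.normSq_apply, hzre, hzim]; ring
  have habs : ‖z‖ = Real.sqrt (1+(a*t)^2) := by
    rw [Complex.norm_def, hns]
  have hwre : (-((a:ℂ)*(‖x‖:ℂ)^2)/(2*z)).re = -(a*‖x‖^2)/(2*(1+(a*t)^2)) := by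
    rw [show (-((a:ℂ)*(‖x‖:ℂ)^2)/(2*z)) = ((-(a*‖x‖^2)/2 : ℝ) : ℂ) * z⁻¹ by
      push_cast; rw [← div_div]; ring]
    rw [Complex.re_ofReal_mul, Complex.inv_re, hzre, hns]
    field_simp
  have habsp : ‖z ^ (-(n:ℂ)/2)‖ = (1+(a*t)^2) ^ (-(n:ℝ)/4) := by
    rw [Complex.norm_cpow_of_ne_zero hz, habs]
    rw [show (-(n:ℂ)/2).re = -(n:ℝ)/2 by simp, show (-(n:ℂ)/2).im = 0 by simp]
    rw [Real.sqrt_eq_rpow, ← Real.rpow_mul hpos.le]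
    norm_num; ring_nf
  have hnorm : ‖Ugrp n t (gauss n a) x‖ ^ (p-1) =
      (1+(a*t)^2) ^ (-(n:ℝ)*(p-1)/4) * Real.exp (-((p-1)*a*‖x‖^2)/(2*(1+(a*t)^2))) := by
    rw [Ugrp_gauss n t ha x]
    rw [norm_mul, habsp, Complex.norm_exp, hwre]
    rw [Real.mul_rpow (by positivity) (Real.exp_pos _).le, ← Real.rpow_mul hpos.le,
      ← Real.exp_mul]
    ring_nf
  rw [nlin, hnorm, Ugrp_gauss n t ha x, ← hzdef]
  rw [Complex.ofReal_mul, Complex.ofReal_exp]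
  rw [show (((1+(a*t)^2) ^ (-(n:ℝ)*(p-1)/4) : ℝ) : ℂ) *
      Complex.exp (((-((p-1)*a*‖x‖^2)/(2*(1+(a*t)^2)) : ℝ) : ℂ)) *
      (z^(-(n:ℂ)/2) * Complex.exp (-((a:ℂ)*(‖x‖:ℂ)^2)/(2*z))) =
      (((1+(a*t)^2) ^ (-(n:ℝ)*(p-1)/4) : ℝ) : ℂ) * z^(-(n:ℂ)/2) *
      (Complex.exp (((-((p-1)*a*‖x‖^2)/(2*(1+(a*t)^2)) : ℝ) : ℂ)) *
       Complex.exp (-((a:ℂ)*(‖x‖:ℂ)^2)/(2*z))) from by ring, ← Complex.exp_add]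
  congr 2
  have h1 : ((1+(a*t)^2 : ℝ) : ℂ) ≠ 0 := by exact_mod_cast hpos.ne'
  set u : ℝ := 1+(a*t)^2 with hu
  push_cast
  field_simp
  ring

/-- **Fourier transform of the Gaussian nonlinearity**: for `a > 0`, `p > 1`, with
`ζ = (p-1)a/(1+(at)²) + a/(1+ita) = a(p - iat)/(1+(at)²)` (which has positive real part),
one has `𝓕(|U(t)g_a|^{p-1}U(t)g_a)(x)
  = (1+(at)²)^{-n(p-1)/4} (1+ita)^{-n/2} ζ^{-n/2} e^{-|x|²/(2ζ)}` (principal branches). -/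
theorem gaussian_nonlinearity_fourier (n : ℕ) (hn : 1 ≤ n) (p : ℝ) (hp : 1 < p)
    (a : ℝ) (ha : 0 < a) (t : ℝ) (ζ : ℂ)
    (hζ : ζ = (a : ℂ) * ((p : ℂ) - Complex.I * (a : ℂ) * (t : ℂ)) /
      (1 + ((a : ℂ) * (t : ℂ)) ^ 2)) :
    ζ = (((p - 1) * a / (1 + (a * t) ^ 2) : ℝ) : ℂ) +
        (a : ℂ) / (1 + Complex.I * (t : ℂ) * (a : ℂ)) ∧
    0 < ζ.re ∧
    ∀ x : Rn n,
      FT n (nlin p (Ugrp n t (gauss n a))) x =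
        (((1 + (a * t) ^ 2) ^ (-((n : ℝ) * (p - 1) / 4)) : ℝ) : ℂ) *
          (1 + Complex.I * (t : ℂ) * (a : ℂ)) ^ (-(n : ℂ) / 2) *
          ζ ^ (-(n : ℂ) / 2) *
          Complex.exp (-(((‖x‖ ^ 2 : ℝ) : ℂ) / (2 * ζ))) := by
  have hpos : (0:ℝ) < 1+(a*t)^2 := by positivity
  have hposC : (1 + (a:ℂ)^2*(t:ℂ)^2) ≠ 0 := by
    rw [show (1 + (a:ℂ)^2*(t:ℂ)^2) = ((1+(a*t)^2 : ℝ) : ℂ) by push_cast; ring]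
    exact_mod_cast hpos.ne'
  set z : ℂ := 1 + Complex.I*(a:ℂ)*(t:ℂ) with hzdef
  have hzcomm : 1 + Complex.I * (t:ℂ) * (a:ℂ) = z := by rw [hzdef]; ring
  have hzre : z.re = 1 := by simp [hzdef]
  have hz : z ≠ 0 := fun h => by simp [h] at hzre
  -- the first conjunct
  have h5 : (1 - Complex.I*(a:ℂ)*(t:ℂ)) ≠ 0 := by
    intro h
    have : (1 - Complex.I*(a:ℂ)*(t:ℂ)).re = 1 := by simp
    rw [h] at this; norm_num at this
  have h4 : ((1+(a*t)^2 : ℝ) : ℂ) =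
      (1 + Complex.I*(a:ℂ)*(t:ℂ)) * (1 - Complex.I*(a:ℂ)*(t:ℂ)) := by
    push_cast; ring_nf; simp [Complex.I_sq]; try ring
  have hζeq : ζ = (((p - 1) * a / (1 + (a * t) ^ 2) : ℝ) : ℂ) + (a : ℂ) / z := by
    have hz' : (1 + Complex.I*(a:ℂ)*(t:ℂ)) ≠ 0 := hz
    rw [hζ, hzdef,
      show (1 + ((a:ℂ) * (t:ℂ)) ^ 2) = ((1+(a*t)^2 : ℝ) : ℂ) by push_cast; ring,
      h4, Complex.ofReal_div, show ((1+(a*t)^2 : ℝ) : ℂ) =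
        (1 + Complex.I*(a:ℂ)*(t:ℂ)) * (1 - Complex.I*(a:ℂ)*(t:ℂ)) from h4]
    rw [div_add_div _ _ (mul_ne_zero hz' h5) hz',
      div_eq_div_iff (mul_ne_zero hz' h5) (mul_ne_zero (mul_ne_zero hz' h5) hz')]
    push_cast
    ring
  -- decomposition marker of ζ into real and imaginary parts
  have hζri : ζ = ((a*p/(1+(a*t)^2) : ℝ) : ℂ) + ((-(a^2*t)/(1+(a*t)^2) : ℝ) : ℂ) * Complex.I := by
    rw [hζ]
    push_cast
    field_simp
    ring
  have hζre : ζ.re = a*p/(1+(a*t)^2) := by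
    rw [hζri]
    simp only [Complex.add_re, Complex.mul_re, Complex.I_re, Complex.I_im,
      Complex.ofReal_re, Complex.ofReal_im]
    ring
  have hζpos : 0 < ζ.re := by
    rw [hζre]
    have hp0 : 0 < p := lt_trans one_pos hp
    positivity
  have hζne : ζ ≠ 0 := fun h => by rw [h] at hζpos; simp at hζpos
  have hζarg : ζ.arg ≠ π := by
    intro h
    have := (Complex.arg_eq_pi_iff.mp h).1
    exact absurd hζpos (by linarith)
  refine ⟨by rw [hζeq, hzcomm], hζpos, fun x => ?_⟩
  -- the main computation
  have hbre : 0 < (ζ/2).re := by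
    rw [show (ζ/2 : ℂ) = ((1/2 : ℝ):ℂ) * ζ by push_cast; ring, Complex.re_ofReal_mul]
    linarith
  have key : (∫ y : Rn n, nlin p (Ugrp n t (gauss n a)) y *
      Complex.exp (-(Complex.I * ((⟪y, x⟫ : ℝ) : ℂ))))
      = ((((1+(a*t)^2) ^ (-(n:ℝ)*(p-1)/4) : ℝ) : ℂ) * z^(-(n:ℂ)/2)) *
        ∫ y : Rn n, Complex.exp (-(ζ/2)*‖y‖^2 + (-Complex.I) * ⟪x, y⟫) := by
    rw [← MeasureTheory.integral_const_mul]
    congr 1; funext y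
    rw [nlin_Ugrp_gauss n t p ha y, ← hzdef, real_inner_comm]
    rw [mul_assoc (_ * _), ← Complex.exp_add]
    congr 2
    rw [hζeq]
    ring
  rw [FT, key, gauss_int n hbre (-Complex.I) x]
  have hpib : (↑π/(ζ/2)) = (((2*π : ℝ)):ℂ) * ζ⁻¹ := by
    push_cast
    field_simp
  have h1 : (↑π/(ζ/2))^((n:ℂ)/2) = (((2*π) ^ ((n:ℝ)/2) : ℝ):ℂ) * ζ^(-(n:ℂ)/2) := by
    rw [hpib, real_mul_cpow' (by positivity) (inv_ne_zero hζne) ((n:ℂ)/2),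
      Complex.inv_cpow _ _ hζarg, ← Complex.cpow_neg,
      Complex.ofReal_cpow (by positivity) ((n:ℝ)/2)]
    push_cast; ring_nf
  have h2 : (-Complex.I)^2 * (‖x‖:ℂ)^2/(4*(ζ/2)) = -((‖x‖^2 : ℝ):ℂ)/(2*ζ) := by
    rw [show ((-Complex.I)^2 : ℂ) = -1 by simp [Complex.I_sq],
      show (4*(ζ/2) : ℂ) = 2*ζ by ring]
    push_cast
    ring
  have h3 : ((2*π) ^ (-(n:ℝ)/2) : ℝ) * ((2*π) ^ ((n:ℝ)/2) : ℝ) = 1 := by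
    rw [← Real.rpow_add (by positivity), neg_div, neg_add_cancel, Real.rpow_zero]
  rw [h1, h2]
  rw [show (((2 * π) ^ (-(n : ℝ) / 2) : ℝ) : ℂ) *
      (((((1+(a*t)^2) ^ (-(n:ℝ)*(p-1)/4) : ℝ) : ℂ) * z^(-(n:ℂ)/2)) *
      ((((2*π) ^ ((n:ℝ)/2) : ℝ):ℂ) * ζ^(-(n:ℂ)/2) * Complex.exp (-((‖x‖^2 : ℝ):ℂ)/(2*ζ)))) =
      (((((2*π) ^ (-(n:ℝ)/2) : ℝ) * ((2*π) ^ ((n:ℝ)/2) : ℝ) : ℝ)):ℂ) *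
      ((((1+(a*t)^2) ^ (-(n:ℝ)*(p-1)/4) : ℝ) : ℂ) * z^(-(n:ℂ)/2) * ζ^(-(n:ℂ)/2) *
        Complex.exp (-((‖x‖^2 : ℝ):ℂ)/(2*ζ))) from by push_cast; ring, h3]
  rw [hzcomm]
  rw [show (-((n:ℝ)*(p-1)/4)) = -(n:ℝ)*(p-1)/4 by ring,
    neg_div (2*ζ) (((‖x‖^2 : ℝ)):ℂ)]
  norm_num
end

section
/- Let n ≥ 1, let p = 1 + 2/n (the long range exponent), let a > 0, and let g_a(x) = e^{−a|x|²/2}. Then for every x ∈ ℝⁿ, the integral ∫₀^{∞} |𝓕(|U(t)g_a|^{p−1} U(t)g_a)(x)| dt diverges (it is +∞), due to a logarithmic divergence at t = ∞: the integrand is asymptotic to a constant multiple of 1/t as t → +∞. -/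
open MeasureTheory Real Complex Filter
open scoped RealInnerProductSpace ENNReal Topology

noncomputable section Aux
namespace LRAux

/-- The constant in the Fourier transform of a Gaussian. -/
def Cg (n : ℕ) (b : ℂ) : ℂ :=
  (((2 * π) ^ (-(n : ℝ) / 2) : ℝ) : ℂ) * (2 * (π : ℂ) / b) ^ ((n : ℂ) / 2)

lemma FT_gaussian (n : ℕ) (b : ℂ) (hb : 0 < b.re) (ξ : Rn n) :
    FT n (fun x => Complex.exp (-(b / 2) * (‖x‖ : ℂ) ^ 2)) ξ
      = Cg n b * Complex.exp (-(‖ξ‖ : ℂ) ^ 2 / (2 * b)) := by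
  rw [FT, Cg, mul_assoc]
  congr 1
  have h : ∫ x : Rn n, Complex.exp (-(b/2) * (‖x‖:ℂ)^2 + (-Complex.I) * ((⟪ξ, x⟫:ℝ):ℂ))
      = (↑π / (b/2)) ^ (Module.finrank ℝ (Rn n) / 2 : ℂ)
        * Complex.exp ((-Complex.I)^2 * (‖ξ‖:ℂ)^2 / (4 * (b/2))) :=
    GaussianFourier.integral_cexp_neg_mul_sq_norm_add (by simpa using hb) _ ξ
  rw [show (fun x : Rn n => Complex.exp (-(b/2) * (‖x‖:ℂ)^2) * Complex.exp (-(Complex.I * ((⟪x, ξ⟫:ℝ):ℂ))))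
      = fun x => Complex.exp (-(b/2) * (‖x‖:ℂ)^2 + (-Complex.I) * ((⟪ξ, x⟫:ℝ):ℂ)) from funext fun x => by
    rw [← Complex.exp_add, real_inner_comm]; ring_nf]
  rw [h]
  have hb0 : b ≠ 0 := fun h0 => by simp [h0] at hb
  congr 1
  · congr 1
    · rw [div_div_eq_mul_div, mul_comm]
    · simp [finrank_euclideanSpace_fin]
  · congr 1
    field_simp
    linear_combination ((‖ξ‖:ℂ) ^ 2 * 4) * Complex.I_sq

lemma abs_Cg (n : ℕ) (b : ℂ) (hb : b ≠ 0) :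
    ‖Cg n b‖ = ‖b‖ ^ (-(n : ℝ) / 2) := by
  have h2π : (0:ℝ) < 2 * π := by positivity
  have habs : (0:ℝ) < ‖b‖ := norm_pos_iff.mpr hb
  rw [Cg, norm_mul, Complex.norm_real, Real.norm_eq_abs, _root_.abs_of_nonneg (Real.rpow_nonneg h2π.le _)]
  rw [show ((n : ℂ) / 2) = (((n : ℝ) / 2 : ℝ) : ℂ) by push_cast; ring]
  rw [Complex.norm_cpow_real, norm_div, norm_mul, Complex.norm_two, Complex.norm_real, Real.norm_eq_abs,
    _root_.abs_of_nonneg Real.pi_pos.le]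
  rw [Real.div_rpow h2π.le habs.le, neg_div, Real.rpow_neg h2π.le, Real.rpow_neg habs.le]
  have h1 : (0:ℝ) < (2*π) ^ ((n:ℝ)/2) := Real.rpow_pos_of_pos h2π _
  field_simp

lemma FTinv_eq (n : ℕ) (f : Rn n → ℂ) (x : Rn n) : FTinv n f x = FT n f (-x) := by
  rw [FTinv, FT]
  congr 1
  apply integral_congr_ae
  filter_upwards with ξ
  congr 2
  rw [show ⟪ξ, -x⟫ = -⟪x, ξ⟫ by rw [inner_neg_right, real_inner_comm]]
  push_cast
  ring

lemma FT_const_mul (n : ℕ) (C : ℂ) (f : Rn n → ℂ) (ξ : Rn n) :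
    FT n (fun y => C * f y) ξ = C * FT n f ξ := by
  rw [FT, FT]
  simp only [mul_assoc]
  rw [integral_const_mul]
  ring

lemma FTinv_const_mul (n : ℕ) (C : ℂ) (f : Rn n → ℂ) (x : Rn n) :
    FTinv n (fun y => C * f y) x = C * FTinv n f x := by
  rw [FTinv_eq, FTinv_eq, FT_const_mul]

lemma gauss_eq (n : ℕ) (a : ℝ) :
    gauss n a = fun y => Complex.exp (-((a:ℂ) / 2) * (‖y‖ : ℂ) ^ 2) := by
  funext y
  rw [gauss]
  congr 1
  push_cast
  ring

/-- `B = 1/a + i t`. -/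
def Bc (a t : ℝ) : ℂ := ((a⁻¹ : ℝ) : ℂ) + Complex.I * (t : ℂ)

lemma Bc_re (a t : ℝ) : (Bc a t).re = a⁻¹ := by simp [Bc]
lemma Bc_im (a t : ℝ) : (Bc a t).im = t := by simp [Bc]

lemma Bc_re_pos {a : ℝ} (ha : 0 < a) (t : ℝ) : 0 < (Bc a t).re := by
  rw [Bc_re]; positivity

lemma Bc_ne_zero {a : ℝ} (ha : 0 < a) (t : ℝ) : Bc a t ≠ 0 :=
  fun h => by simpa [h] using (Bc_re_pos ha t).ne'

lemma normSq_Bc {a : ℝ} (t : ℝ) : Complex.normSq (Bc a t) = a⁻¹ ^ 2 + t ^ 2 := by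
  rw [Complex.normSq_apply, Bc_re, Bc_im]; ring

lemma Ugrp_gauss (n : ℕ) {a : ℝ} (ha : 0 < a) (t : ℝ) :
    Ugrp n t (gauss n a) = fun y =>
      (Cg n a * Cg n (Bc a t)) * Complex.exp (-(‖y‖ : ℂ) ^ 2 / (2 * Bc a t)) := by
  have ha0 : (a : ℂ) ≠ 0 := by exact_mod_cast ha.ne'
  funext y
  rw [Ugrp]
  have h1 : (fun ξ : Rn n => Complex.exp (-(Complex.I * ((t / 2 : ℝ) : ℂ) * ((‖ξ‖ ^ 2 : ℝ) : ℂ))) * FT n (gauss n a) ξ)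
      = fun ξ => Cg n a * Complex.exp (-(Bc a t / 2) * (‖ξ‖ : ℂ) ^ 2) := by
    funext ξ
    rw [gauss_eq, FT_gaussian n (a:ℂ) (by simpa using ha) ξ, ← mul_assoc, mul_comm _ (Cg n a),
      mul_assoc, ← Complex.exp_add]
    congr 2
    rw [Bc]
    push_cast
    field_simp
    ring
  rw [h1, FTinv_const_mul, FTinv_eq, FT_gaussian n (Bc a t) (Bc_re_pos ha t) (-y), norm_neg,
    ← mul_assoc]


/-- `β = (p-1)·Re(1/B) + 1/B`. -/
def betac (p a t : ℝ) : ℂ := (((p - 1) * ((Bc a t)⁻¹).re : ℝ) : ℂ) + (Bc a t)⁻¹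

lemma inv_Bc_re {a : ℝ} (t : ℝ) : ((Bc a t)⁻¹).re = a⁻¹ / (a⁻¹ ^ 2 + t ^ 2) := by
  rw [Complex.inv_re, Bc_re, normSq_Bc]

lemma inv_Bc_im {a : ℝ} (t : ℝ) : ((Bc a t)⁻¹).im = -t / (a⁻¹ ^ 2 + t ^ 2) := by
  rw [Complex.inv_im, Bc_im, normSq_Bc]

lemma betac_re {a : ℝ} (p t : ℝ) :
    (betac p a t).re = p * a⁻¹ / (a⁻¹ ^ 2 + t ^ 2) := by
  rw [betac, Complex.add_re, Complex.ofReal_re, inv_Bc_re]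
  ring

lemma betac_im {a : ℝ} (p t : ℝ) :
    (betac p a t).im = -t / (a⁻¹ ^ 2 + t ^ 2) := by
  rw [betac, Complex.add_im, Complex.ofReal_im, inv_Bc_im, zero_add]

lemma betac_re_pos {p a : ℝ} (hp : 0 < p) (ha : 0 < a) (t : ℝ) : 0 < (betac p a t).re := by
  rw [betac_re]
  have h1 : (0:ℝ) < a⁻¹ := by positivity
  have h2 : (0:ℝ) < a⁻¹ ^ 2 + t ^ 2 := by positivity
  positivity

lemma nlin_Ugrp_gauss (n : ℕ) {p a : ℝ} (hp : 0 < p) (ha : 0 < a) (t : ℝ) :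
    nlin p (Ugrp n t (gauss n a)) = fun y =>
      ((‖Cg n a * Cg n (Bc a t)‖ ^ (p - 1) : ℝ) : ℂ) * (Cg n a * Cg n (Bc a t)) *
        Complex.exp (-(betac p a t / 2) * (‖y‖ : ℂ) ^ 2) := by
  have hB0 : Bc a t ≠ 0 := Bc_ne_zero ha t
  funext y
  rw [nlin, Ugrp_gauss n ha t]
  set c := Cg n a * Cg n (Bc a t) with hc
  have hz : -(‖y‖ : ℂ) ^ 2 / (2 * Bc a t) = ((-‖y‖ ^ 2 / 2 : ℝ) : ℂ) * (Bc a t)⁻¹ := by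
    push_cast
    field_simp
  have hnorm : ‖c * Complex.exp (-(‖y‖ : ℂ) ^ 2 / (2 * Bc a t))‖
      = ‖c‖ * Real.exp ((-‖y‖ ^ 2 / 2) * ((Bc a t)⁻¹).re) := by
    rw [norm_mul, Complex.norm_exp, hz, Complex.re_ofReal_mul]
  rw [hnorm]
  rw [Real.mul_rpow (norm_nonneg _) (Real.exp_pos _).le, ← Real.exp_mul]
  push_cast
  have harg : (-(‖y‖:ℂ)^2/2 * (((Bc a t)⁻¹.re : ℝ):ℂ) * ((p:ℂ)-1)) + (-(‖y‖:ℂ)^2/(2*Bc a t))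
      = -(betac p a t/2) * (‖y‖:ℂ)^2 := by
    rw [hz, betac]; push_cast; ring
  rw [mul_mul_mul_comm, ← Complex.exp_add, harg]

lemma rpow_calc {a D E p n' s : ℝ} (ha : 0 < a) (hD : 0 < D) (hE : 0 < E)
    (hs : s = -n' / 2) :
    (a ^ s * (D ^ (1/2:ℝ)) ^ s) ^ (p - 1) * (a ^ s * (D ^ (1/2:ℝ)) ^ s) *
        ((E / D ^ 2) ^ (1/2:ℝ)) ^ s
      = a ^ (-n'/2 * p) * D ^ ((-n'/4) * p + n'/2) * E ^ (-n'/4) := by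
  have hX : 0 < a ^ s * (D ^ (1/2:ℝ)) ^ s := by positivity
  rw [← Real.rpow_add_one hX.ne', sub_add_cancel]
  have e1 : (D ^ (1/2:ℝ)) ^ s = D ^ (1/2 * s) := (Real.rpow_mul hD.le _ _).symm
  have e2 : ((E / D ^ 2) ^ (1/2:ℝ)) ^ s = E ^ (1/2 * s) * D ^ (-s) := by
    rw [← Real.rpow_mul (by positivity) (1/2) s, Real.div_rpow hE.le (by positivity),
      ← Real.rpow_natCast D 2, ← Real.rpow_mul hD.le]
    rw [div_eq_mul_inv, ← Real.rpow_neg hD.le, show -(((2:ℕ):ℝ)*(1/2*s)) = -s by push_cast; ring]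
  rw [e1, e2, Real.mul_rpow (by positivity) (by positivity),
    ← Real.rpow_mul ha.le, ← Real.rpow_mul hD.le]
  rw [show a ^ (s*p) * D ^ (1/2*s*p) * (E ^ (1/2*s) * D ^ (-s))
      = a ^ (s*p) * (D ^ (1/2*s*p) * D ^ (-s)) * E ^ (1/2*s) by ring]
  rw [← Real.rpow_add hD]
  rw [show s * p = -n'/2 * p by rw [hs], show 1/2*s*p + -s = (-n'/4) * p + n'/2 by rw [hs]; ring,
    show 1/2*s = -n'/4 by rw [hs]; ring]

lemma normSq_betac {p a : ℝ} (ha : 0 < a) (t : ℝ) :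
    Complex.normSq (betac p a t) = (p^2 * a⁻¹^2 + t^2) / (a⁻¹^2 + t^2)^2 := by
  have hD : (0:ℝ) < a⁻¹^2 + t^2 := by positivity
  rw [Complex.normSq_apply, betac_re, betac_im]
  field_simp

lemma inv_betac_re {p a : ℝ} (hp : 0 < p) (ha : 0 < a) (t : ℝ) :
    ((betac p a t)⁻¹).re = p * a⁻¹ * (a⁻¹^2 + t^2) / (p^2 * a⁻¹^2 + t^2) := by
  have hD : (0:ℝ) < a⁻¹^2 + t^2 := by positivity
  have hE : (0:ℝ) < p^2 * a⁻¹^2 + t^2 := by positivity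
  rw [Complex.inv_re, betac_re, normSq_betac ha]
  field_simp

lemma betac_ne_zero {p a : ℝ} (hp : 0 < p) (ha : 0 < a) (t : ℝ) : betac p a t ≠ 0 :=
  fun h => by simpa [h] using (betac_re_pos hp ha t).ne'

lemma norm_FT_nlin (n : ℕ) {p a : ℝ} (hp : 0 < p) (ha : 0 < a) (x : Rn n) (t : ℝ) :
    ‖FT n (nlin p (Ugrp n t (gauss n a))) x‖
      = a ^ (-(n:ℝ)/2 * p) * (a⁻¹^2 + t^2) ^ ((-(n:ℝ)/4) * p + (n:ℝ)/2) *
          (p^2 * a⁻¹^2 + t^2) ^ (-(n:ℝ)/4) *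
          Real.exp (-‖x‖^2 / 2 * (p * a⁻¹ * (a⁻¹^2 + t^2) / (p^2 * a⁻¹^2 + t^2))) := by
  have hD : (0:ℝ) < a⁻¹^2 + t^2 := by positivity
  have hE : (0:ℝ) < p^2 * a⁻¹^2 + t^2 := by positivity
  have hβ := betac_re_pos hp ha t
  have hβ0 := betac_ne_zero hp ha t
  have ha0 : (a:ℂ) ≠ 0 := by exact_mod_cast ha.ne'
  rw [nlin_Ugrp_gauss n hp ha t]
  rw [show (fun y : Rn n =>
        ((‖Cg n a * Cg n (Bc a t)‖ ^ (p - 1) : ℝ) : ℂ) * (Cg n a * Cg n (Bc a t)) *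
          Complex.exp (-(betac p a t / 2) * (‖y‖ : ℂ) ^ 2))
      = fun y => (((‖Cg n a * Cg n (Bc a t)‖ ^ (p - 1) : ℝ) : ℂ) * (Cg n a * Cg n (Bc a t))) *
          Complex.exp (-(betac p a t / 2) * (‖y‖ : ℂ) ^ 2) from rfl]
  rw [FT_const_mul, FT_gaussian n (betac p a t) hβ x]
  have hz : -(‖x‖ : ℂ) ^ 2 / (2 * betac p a t) = ((-‖x‖ ^ 2 / 2 : ℝ) : ℂ) * (betac p a t)⁻¹ := by
    push_cast; field_simp
  rw [norm_mul, norm_mul, norm_mul, norm_mul, Complex.norm_real, Real.norm_eq_abs,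
    Complex.norm_exp, hz, Complex.re_ofReal_mul, inv_betac_re hp ha,
    abs_Cg n _ ha0, abs_Cg n _ (Bc_ne_zero ha t), abs_Cg n _ hβ0,
    Complex.norm_real, Real.norm_eq_abs, _root_.abs_of_pos ha,
    _root_.abs_of_nonneg (by positivity : (0:ℝ) ≤ (a ^ (-(n:ℝ)/2) * ‖Bc a t‖ ^ (-(n:ℝ)/2)) ^ (p-1))]
  rw [Complex.norm_def, normSq_Bc, Complex.norm_def, normSq_betac ha,
    Real.sqrt_eq_rpow, Real.sqrt_eq_rpow]
  have hcalc := rpow_calc (n' := (n:ℝ)) (p := p) (s := -(n:ℝ)/2) ha hD hE rfl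
  linear_combination Real.exp (-‖x‖^2/2 * (p * a⁻¹ * (a⁻¹^2+t^2) / (p^2*a⁻¹^2+t^2))) * hcalc

lemma tendsto_DE {p a : ℝ} (hp : 0 < p) (ha : 0 < a) :
    Tendsto (fun t : ℝ => (a⁻¹^2 + t^2) / (p^2 * a⁻¹^2 + t^2)) atTop (𝓝 1) := by
  have hE_top : Tendsto (fun t : ℝ => p^2 * a⁻¹^2 + t^2) atTop atTop :=
    tendsto_atTop_add_const_left _ _ (tendsto_pow_atTop two_ne_zero)
  have h0 : Tendsto (fun t : ℝ => (a⁻¹^2 - p^2 * a⁻¹^2) / (p^2 * a⁻¹^2 + t^2)) atTop (𝓝 0) := by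
    simpa [div_eq_mul_inv] using tendsto_const_nhds.mul hE_top.inv_tendsto_atTop
  have heq : ∀ t : ℝ, (a⁻¹^2 + t^2) / (p^2 * a⁻¹^2 + t^2)
      = 1 + (a⁻¹^2 - p^2 * a⁻¹^2) / (p^2 * a⁻¹^2 + t^2) := by
    intro t
    have hE : (0:ℝ) < p^2 * a⁻¹^2 + t^2 := by positivity
    field_simp
    ring
  rw [show (1:ℝ) = 1 + 0 by ring]
  exact Tendsto.congr (fun t => (heq t).symm) (tendsto_const_nhds.add h0)

lemma tendsto_tE {p a : ℝ} (hp : 0 < p) (ha : 0 < a) :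
    Tendsto (fun t : ℝ => t^2 / (p^2 * a⁻¹^2 + t^2)) atTop (𝓝 1) := by
  have hE_top : Tendsto (fun t : ℝ => p^2 * a⁻¹^2 + t^2) atTop atTop :=
    tendsto_atTop_add_const_left _ _ (tendsto_pow_atTop two_ne_zero)
  have h0 : Tendsto (fun t : ℝ => (p^2 * a⁻¹^2) / (p^2 * a⁻¹^2 + t^2)) atTop (𝓝 0) := by
    simpa [div_eq_mul_inv] using tendsto_const_nhds.mul hE_top.inv_tendsto_atTop
  have heq : ∀ t : ℝ, t^2 / (p^2 * a⁻¹^2 + t^2)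
      = 1 - (p^2 * a⁻¹^2) / (p^2 * a⁻¹^2 + t^2) := by
    intro t
    have hE : (0:ℝ) < p^2 * a⁻¹^2 + t^2 := by positivity
    field_simp
    ring
  rw [show (1:ℝ) = 1 - 0 by ring]
  exact Tendsto.congr (fun t => (heq t).symm) (tendsto_const_nhds.sub h0)

lemma t_rpow_eq {n : ℕ} (hn : 1 ≤ n) {p a : ℝ} (hp : p = 1 + 2 / (n : ℝ)) (ha : 0 < a)
    {t : ℝ} (ht : 0 < t) :
    t * ((a⁻¹^2 + t^2) ^ ((-(n:ℝ)/4) * p + (n:ℝ)/2) * (p^2 * a⁻¹^2 + t^2) ^ (-(n:ℝ)/4))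
      = (((a⁻¹^2 + t^2) / (p^2 * a⁻¹^2 + t^2)) ^ (2 * ((-(n:ℝ)/4) * p + (n:ℝ)/2)) *
          (t^2 / (p^2 * a⁻¹^2 + t^2))) ^ (1/2:ℝ) := by
  have hD : (0:ℝ) < a⁻¹^2 + t^2 := by positivity
  have hE : (0:ℝ) < p^2 * a⁻¹^2 + t^2 := by positivity
  have hn0 : (n:ℝ) ≠ 0 := by exact_mod_cast Nat.one_le_iff_ne_zero.1 hn
  set e1 : ℝ := (-(n:ℝ)/4) * p + (n:ℝ)/2 with he1
  have he2 : -e1 - 1/2 = -(n:ℝ)/4 := by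
    rw [he1, hp]; field_simp; ring
  have h3 : ((t^2 : ℝ)) ^ (1/2:ℝ) = t := by
    rw [← Real.rpow_natCast t 2, ← Real.rpow_mul ht.le]
    norm_num
  rw [Real.mul_rpow (by positivity) (by positivity),
    ← Real.rpow_mul (by positivity : (0:ℝ) ≤ (a⁻¹^2 + t^2) / (p^2 * a⁻¹^2 + t^2)),
    show 2 * e1 * (1/2) = e1 by ring,
    Real.div_rpow hD.le hE.le, Real.div_rpow (by positivity : (0:ℝ) ≤ t^2) hE.le, h3]
  rw [show -(n:ℝ)/4 = -(e1 + 1/2) by rw [← he2]; ring, Real.rpow_neg hE.le, Real.rpow_add hE]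
  have hu : ((p^2 * a⁻¹^2 + t^2 : ℝ)) ^ e1 ≠ 0 := (Real.rpow_pos_of_pos hE _).ne'
  have hv : ((p^2 * a⁻¹^2 + t^2 : ℝ)) ^ (1/2:ℝ) ≠ 0 := (Real.rpow_pos_of_pos hE _).ne'
  field_simp

lemma tendsto_main (n : ℕ) (hn : 1 ≤ n) {p a : ℝ} (hp : p = 1 + 2 / (n : ℝ)) (ha : 0 < a)
    (x : Rn n) :
    Tendsto (fun t : ℝ => t * ‖FT n (nlin p (Ugrp n t (gauss n a))) x‖) atTop
      (𝓝 (a ^ (-(n:ℝ)/2 * p) * Real.exp (-‖x‖^2/2 * (p * a⁻¹)))) := by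
  have hn0 : (0:ℝ) < (n:ℝ) := by exact_mod_cast hn
  have hp1 : 0 < p := by rw [hp]; positivity
  set e1 : ℝ := (-(n:ℝ)/4) * p + (n:ℝ)/2 with he1
  -- the main product without the constant
  have hG : Tendsto (fun t : ℝ =>
      (((a⁻¹^2 + t^2) / (p^2 * a⁻¹^2 + t^2)) ^ (2 * e1) *
        (t^2 / (p^2 * a⁻¹^2 + t^2))) ^ (1/2:ℝ)) atTop (𝓝 1) := by
    have h := (Filter.Tendsto.rpow_const (p := 2 * e1) (tendsto_DE hp1 ha)
      (Or.inl one_ne_zero)).mul (tendsto_tE hp1 ha)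
    have h2 := Filter.Tendsto.rpow_const (p := (1/2:ℝ)) h (Or.inr (by norm_num))
    simpa using h2
  have hG' : Tendsto (fun t : ℝ =>
      t * ((a⁻¹^2 + t^2) ^ e1 * (p^2 * a⁻¹^2 + t^2) ^ (-(n:ℝ)/4))) atTop (𝓝 1) := by
    apply hG.congr'
    filter_upwards [eventually_gt_atTop (0:ℝ)] with t ht
    exact (t_rpow_eq hn hp ha ht).symm
  have hexp : Tendsto (fun t : ℝ =>
      Real.exp (-‖x‖^2/2 * (p * a⁻¹ * (a⁻¹^2 + t^2) / (p^2 * a⁻¹^2 + t^2)))) atTop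
      (𝓝 (Real.exp (-‖x‖^2/2 * (p * a⁻¹)))) := by
    apply (Real.continuous_exp.tendsto _).comp
    have h := tendsto_const_nhds (x := (-‖x‖^2/2 * (p * a⁻¹) : ℝ)) (f := (atTop : Filter ℝ))
    have h2 := h.mul (tendsto_DE hp1 ha)
    rw [mul_one] at h2
    apply h2.congr
    intro t
    ring
  have hmain := (tendsto_const_nhds (x := (a ^ (-(n:ℝ)/2 * p) : ℝ))
      (f := (atTop : Filter ℝ))).mul (hG'.mul hexp)
  rw [show a ^ (-(n:ℝ)/2 * p) * (1 * Real.exp (-‖x‖^2/2 * (p * a⁻¹)))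
      = a ^ (-(n:ℝ)/2 * p) * Real.exp (-‖x‖^2/2 * (p * a⁻¹)) by ring] at hmain
  apply hmain.congr
  intro t
  rw [norm_FT_nlin n hp1 ha x t]
  ring

lemma lintegral_inv_top (T c₀ : ℝ) (hT : 0 < T) (hc : 0 < c₀) :
    ∫⁻ t in Set.Ioi T, ENNReal.ofReal (c₀ * t⁻¹) = ⊤ := by
  by_contra h
  have hint : IntegrableOn (fun t : ℝ => c₀ * t⁻¹) (Set.Ioi T) := by
    constructor
    · exact (measurable_const.mul measurable_inv).aestronglyMeasurable
    · have h0 : 0 ≤ᵐ[volume.restrict (Set.Ioi T)] fun t : ℝ => c₀ * t⁻¹ := by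
        rw [EventuallyLE, ae_restrict_iff' measurableSet_Ioi]
        filter_upwards with t ht
        have h1 : (0:ℝ) < t := hT.trans ht
        positivity
      rw [hasFiniteIntegral_iff_ofReal h0]
      exact lt_top_iff_ne_top.2 h
  have h2 := hint.const_mul (c₀⁻¹)
  have h3 : (fun t : ℝ => c₀⁻¹ * (c₀ * t⁻¹)) = fun t : ℝ => t⁻¹ := by
    funext t; field_simp
  rw [h3] at h2
  exact not_IntegrableOn_Ioi_inv h2

end LRAux
end Aux

/-- **Long range divergence of the first integral**: for the long range exponent
`p = 1 + 2/n`, `a > 0` and every `x`, `∫₀^∞ |𝓕(|U(t)g_a|^{p-1}U(t)g_a)(x)| dt = +∞`,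
the integrand being asymptotic to a (positive) constant multiple of `1/t` as `t → +∞`. -/
theorem longrange_divergence_lhs (n : ℕ) (hn : 1 ≤ n) (p : ℝ) (hp : p = 1 + 2 / (n : ℝ))
    (a : ℝ) (ha : 0 < a) (x : Rn n) :
    (∫⁻ t in Set.Ioi (0 : ℝ),
        ENNReal.ofReal ‖FT n (nlin p (Ugrp n t (gauss n a))) x‖) = ⊤ ∧
    ∃ c : ℝ, 0 < c ∧
      Tendsto (fun t : ℝ => t * ‖FT n (nlin p (Ugrp n t (gauss n a))) x‖) atTop (𝓝 c) := by
  have hn0 : (0:ℝ) < (n:ℝ) := by exact_mod_cast hn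
  have hp1 : 0 < p := by rw [hp]; positivity
  set c : ℝ := a ^ (-(n:ℝ)/2 * p) * Real.exp (-‖x‖^2/2 * (p * a⁻¹)) with hc
  have hcpos : 0 < c := by
    rw [hc]
    have := Real.rpow_pos_of_pos ha (-(n:ℝ)/2 * p)
    positivity
  have htend := LRAux.tendsto_main n hn hp ha x
  refine ⟨?_, c, hcpos, htend⟩
  have hev : ∀ᶠ t in atTop,
      c/2 < t * ‖FT n (nlin p (Ugrp n t (gauss n a))) x‖ :=
    htend.eventually (eventually_gt_nhds (by linarith))
  obtain ⟨T, hT⟩ := eventually_atTop.1 (hev.and (eventually_ge_atTop 1))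
  set T' : ℝ := max T 1 with hT'
  have hT'pos : (0:ℝ) < T' := lt_of_lt_of_le one_pos (le_max_right _ _)
  have key : (⊤:ℝ≥0∞) ≤ ∫⁻ t in Set.Ioi (0:ℝ),
      ENNReal.ofReal ‖FT n (nlin p (Ugrp n t (gauss n a))) x‖ := by
    calc (⊤:ℝ≥0∞) = ∫⁻ t in Set.Ioi T', ENNReal.ofReal ((c/2) * t⁻¹) :=
          (LRAux.lintegral_inv_top T' (c/2) hT'pos (by positivity)).symm
      _ ≤ ∫⁻ t in Set.Ioi T',
            ENNReal.ofReal ‖FT n (nlin p (Ugrp n t (gauss n a))) x‖ := by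
          apply lintegral_mono_ae
          rw [ae_restrict_iff' measurableSet_Ioi]
          filter_upwards with t ht
          obtain ⟨hgt, hge1⟩ := hT t ((le_max_left _ _).trans ht.le)
          have ht0 : (0:ℝ) < t := lt_of_lt_of_le one_pos hge1
          apply ENNReal.ofReal_le_ofReal
          have hgt' : c/2 ≤ ‖FT n (nlin p (Ugrp n t (gauss n a))) x‖ * t := by
            rw [mul_comm]; exact hgt.le
          calc c/2 * t⁻¹ = c/2/t := (div_eq_mul_inv _ _).symm
            _ ≤ _ := (div_le_iff₀ ht0).2 hgt'
      _ ≤ _ := lintegral_mono_set (Set.Ioi_subset_Ioi hT'pos.le)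
  exact top_le_iff.1 key
end
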